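/- Let k ≥ 1 be a natural number, let R > 0, let p : Fin k → ℝ satisfy p_j ≥ 0 and ∑_j p_j = 1, and let x, y : Fin k → ℝ satisfy x_j ≥ 0 and y_j ≥ 0. Write X = ∑_j x_j and Y = ∑_j y_j. Define E₀ = (2·∑_j p_j·(x_j + y_j) - (X + Y))·R, and for each i define E_i = (2·∑_j p_j·(x_j + y_j) - (X + 2·∑_{j ≠ i} p_j·y_j + y_i))·R. Then there exists an index i such that E_i ≥ E₀. -/

import Mathlib

/-- multi-fork slashing analysis (Theorem 2, nothing-at-stake immunity):
some single-fork strategy `E_i` is at least as good as publishing on all forks `E₀`. -/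
theorem multi_fork_slashing (k : ℕ) (hk : 1 ≤ k) (R : ℝ) (hR : 0 < R)
    (p : Fin k → ℝ) (hp : ∀ j, 0 ≤ p j) (hsum : ∑ j, p j = 1)
    (x y : Fin k → ℝ) (hx : ∀ j, 0 ≤ x j) (hy : ∀ j, 0 ≤ y j)
    (X Y : ℝ) (hX : X = ∑ j, x j) (hY : Y = ∑ j, y j)
    (E₀ : ℝ) (hE₀ : E₀ = (2 * ∑ j, p j * (x j + y j) - (X + Y)) * R)
    (E : Fin k → ℝ)
    (hE : ∀ i, E i =
      (2 * ∑ j, p j * (x j + y j) -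
        (X + 2 * ∑ j ∈ Finset.univ \ {i}, p j * y j + y i)) * R) :
    ∃ i : Fin k, E i ≥ E₀ := by
  have hne : (Finset.univ : Finset (Fin k)).Nonempty := by
    simpa [Finset.univ_nonempty_iff, Fin.pos_iff_nonempty.symm] using (by omega : 0 < k)
  obtain ⟨i, -, hi⟩ := Finset.exists_max_image Finset.univ p hne
  refine ⟨i, ?_⟩
  -- each j ≠ i has p j ≤ 1/2
  have hhalf : ∀ j ∈ Finset.univ \ {i}, p j ≤ 1 / 2 := by
    intro j hj
    simp only [Finset.mem_sdiff, Finset.mem_singleton] at hj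
    have hji : j ≠ i := hj.2
    have hpair : p j + p i ≤ 1 := by
      have := Finset.sum_le_sum_of_subset_of_nonneg
        (Finset.subset_univ ({j, i} : Finset (Fin k)))
        (fun a _ _ => hp a)
      rw [Finset.sum_pair hji] at this
      linarith [hsum ▸ this]
    have := hi j (Finset.mem_univ j)
    linarith
  -- hence ∑_{j≠i} (y j - 2 p j y j) ≥ 0
  have hkey : 0 ≤ ∑ j ∈ Finset.univ \ {i}, (y j - 2 * (p j * y j)) := by
    apply Finset.sum_nonneg
    intro j hj
    have h1 := hhalf j hj
    have h2 := hy j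
    nlinarith
  have hYsplit : Y - y i = ∑ j ∈ Finset.univ \ {i}, y j := by
    rw [hY, Finset.sum_sdiff_eq_sub (Finset.subset_univ _), Finset.sum_singleton]
  have hdiff : Y - (2 * ∑ j ∈ Finset.univ \ {i}, p j * y j + y i) =
      ∑ j ∈ Finset.univ \ {i}, (y j - 2 * (p j * y j)) := by
    rw [Finset.sum_sub_distrib, ← Finset.mul_sum]
    linarith [hYsplit]
  rw [hE i, hE₀]
  have : X + 2 * ∑ j ∈ Finset.univ \ {i}, p j * y j + y i ≤ X + Y := by
    have := hdiff ▸ hkey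
    linarith
  have hmul : (2 * ∑ j, p j * (x j + y j) - (X + Y)) ≤
      (2 * ∑ j, p j * (x j + y j) -
        (X + 2 * ∑ j ∈ Finset.univ \ {i}, p j * y j + y i)) := by linarith
  exact mul_le_mul_of_nonneg_right hmul hR.le
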